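/- (Lemma 1, reverse direction) With f as in the previous setting, if there exists an assignment a of the first n₁ variables such that φ(a, b) = false for every assignment b of the remaining n₂ − n₁ variables, then the fully free sub-hypercube is not a minimal trap space of f: the sub-hypercube fixing the first n₁ coordinates to a, leaving coordinates n₁+1..n₂ free, and fixing the last two coordinates to false, is a trap space strictly contained in it. -/
import Mathlib


def vset {n : ℕ} (h : Fin n → Option Bool) : Set (Fin n → Bool) :=
  { x | ∀ i b, h i = some b → x i = b }

def IsTrap {n : ℕ} (f : (Fin n → Bool) → (Fin n → Bool)) (h : Fin n → Option Bool) : Prop :=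
  ∀ x ∈ vset h, f x ∈ vset h

def IsMinTrap {n : ℕ} (f : (Fin n → Bool) → (Fin n → Bool)) (h : Fin n → Option Bool) : Prop :=
  IsTrap f h ∧ ∀ h' : Fin n → Option Bool, IsTrap f h' → ¬ (vset h' ⊂ vset h)

theorem stmt_18 {n₁ n₂ : ℕ} (hle : n₁ ≤ n₂)
    (f : (Fin (n₂+2) → Bool) → (Fin (n₂+2) → Bool))
    (φ : (Fin n₂ → Bool) → Bool)
    (i₁ : Fin (n₂+2)) (i₂ : Fin (n₂+2)) (hi₁ : (i₁ : ℕ) = n₂) (hi₂ : (i₂ : ℕ) = n₂ + 1)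
    (hfa : ∀ (j : Fin n₂), (j : ℕ) < n₁ → ∀ x,
      f x (Fin.castAdd 2 j) = ((x (Fin.castAdd 2 j) && ! x i₁) || x i₂))
    (hfb : ∀ (j : Fin n₂), n₁ ≤ (j : ℕ) → ∀ x,
      f x (Fin.castAdd 2 j) = ! x (Fin.castAdd 2 j))
    (hf₁ : ∀ x, f x i₁ = (φ (fun i : Fin n₂ => x (Fin.castAdd 2 i)) && ! x i₂))
    (hf₂ : ∀ x, f x i₂ = (x i₁ && ! x i₂))
    (a : Fin n₁ → Bool)
    (hunsat : ∀ b : Fin (n₂ - n₁) → Bool,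
      φ (fun i => if hi : (i : ℕ) < n₁ then a ⟨i, hi⟩
                  else b ⟨(i : ℕ) - n₁, by omega⟩) = false) :
    IsTrap f (fun i => if hi : (i : ℕ) < n₁ then some (a ⟨i, hi⟩)
              else if (i : ℕ) < n₂ then none else some false) ∧
    vset (fun i => if hi : (i : ℕ) < n₁ then some (a ⟨i, hi⟩)
              else if (i : ℕ) < n₂ then none else some false)
      ⊂ vset (fun _ : Fin (n₂+2) => (none : Option Bool)) ∧
    ¬ IsMinTrap f (fun _ => none) := by
  set h : Fin (n₂+2) → Option Bool := fun i => if hi : (i : ℕ) < n₁ then some (a ⟨i, hi⟩)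
              else if (i : ℕ) < n₂ then none else some false with hh
  have hhi₁ : h i₁ = some false := by
    simp only [hh, hi₁]; rw [dif_neg (by omega), if_neg (by omega)]
  have hhi₂ : h i₂ = some false := by
    simp only [hh, hi₂]; rw [dif_neg (by omega), if_neg (by omega)]
  have htrap : IsTrap f h := by
    intro x hx
    have hx1 : x i₁ = false := hx i₁ false hhi₁
    have hx2 : x i₂ = false := hx i₂ false hhi₂
    have hφ : φ (fun i : Fin n₂ => x (Fin.castAdd 2 i)) = false := by
      have := hunsat (fun k => x (Fin.castAdd 2 ⟨n₁ + (k : ℕ), by omega⟩))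
      rw [← this]
      congr 1
      funext i
      by_cases hi : (i : ℕ) < n₁
      · rw [dif_pos hi]
        exact hx (Fin.castAdd 2 i) _ (by simp only [hh]; rw [dif_pos (by simpa using hi)]; rfl)
      · rw [dif_neg hi]
        congr 1
        apply Fin.ext
        simp; omega
    intro i b hib
    by_cases hi : (i : ℕ) < n₁
    · have hib' : b = a ⟨i, hi⟩ := by
        simp only [hh] at hib; rw [dif_pos hi] at hib; exact (Option.some_inj.mp hib).symm
      have hje : Fin.castAdd 2 (⟨i, by omega⟩ : Fin n₂) = i := Fin.ext (by simp)
      have := hfa ⟨i, by omega⟩ hi x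
      rw [hje] at this
      rw [this, hx1, hx2, hib']
      have : x i = a ⟨i, hi⟩ := hx i _ (by simp only [hh]; rw [dif_pos hi])
      rw [this]; simp
    · by_cases hi2 : (i : ℕ) < n₂
      · simp only [hh] at hib; rw [dif_neg hi, if_pos hi2] at hib; exact absurd hib (by simp)
      · simp only [hh] at hib; rw [dif_neg hi, if_neg hi2] at hib
        have hb : b = false := (Option.some_inj.mp hib).symm
        have : (i : ℕ) = n₂ ∨ (i : ℕ) = n₂ + 1 := by omega
        rcases this with h1 | h2
        · have : i = i₁ := Fin.ext (by omega)
          rw [this, hf₁, hφ, hb]; simp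
        · have : i = i₂ := Fin.ext (by omega)
          rw [this, hf₂, hx1, hb]; simp
  have hss : vset h ⊂ vset (fun _ : Fin (n₂+2) => (none : Option Bool)) := by
    constructor
    · intro x _ i b hib; simp at hib
    · intro hsub
      have : (fun _ : Fin (n₂+2) => true) ∈ vset h := hsub (by intro i b hib; simp at hib)
      have := this i₂ false hhi₂
      simp at this
  refine ⟨htrap, hss, ?_⟩
  rintro ⟨-, hmin⟩
  exact hmin h htrap hss
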